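/- Let f : F_2^n → F_2 have ANF coefficients (a_u), so f(x) = ⊕_{u ⪯ x} a_u. Viewing each a_u as an element of {0,1} ⊆ ℤ, the weight of f satisfies wt(f) = Σ_{∅ ≠ I ⊆ F_2^n} (−2)^{|I|−1} · 2^{n − wt(∨_{u∈I} u)} · ∏_{u ∈ I} a_u, where the sum is over nonempty finite subsets I of F_2^n and ∨ denotes componentwise OR. -/

import Mathlib

open Finset

abbrev supp {n : ℕ} (x : Fin n → ZMod 2) : Finset (Fin n) := univ.filter (fun i => x i ≠ 0)
abbrev wt {n : ℕ} (x : Fin n → ZMod 2) : ℕ := (supp x).card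

lemma chi_add (x y : ZMod 2) :
    (1 - 2 * ((x + y).val : ℤ)) = (1 - 2 * (x.val : ℤ)) * (1 - 2 * (y.val : ℤ)) := by
  fin_cases x <;> fin_cases y <;> rfl

lemma chi_sum {α : Type*} [DecidableEq α] (s : Finset α) (g : α → ZMod 2) :
    (1 - 2 * ((∑ i ∈ s, g i).val : ℤ)) = ∏ i ∈ s, (1 - 2 * ((g i).val : ℤ)) := by
  induction s using Finset.induction_on with
  | empty => simp
  | insert _ _ h ih =>
    rw [Finset.sum_insert h, Finset.prod_insert h, chi_add, ih]

lemma zmod2_ne_zero_iff (z : ZMod 2) : z ≠ 0 ↔ z = 1 := by revert z; decide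

lemma count_superset {n : ℕ} (B : Finset (Fin n)) :
    (univ.filter (fun x : Fin n → ZMod 2 => B ⊆ supp x)).card = 2 ^ (n - B.card) := by
  have h1 : univ.filter (fun x : Fin n → ZMod 2 => B ⊆ supp x)
      = Fintype.piFinset (fun i => if i ∈ B then ({1} : Finset (ZMod 2)) else univ) := by
    ext x
    simp only [mem_filter, mem_univ, true_and, Fintype.mem_piFinset]
    constructor
    · intro h i
      by_cases hi : i ∈ B
      · have hx := h hi
        simp only [supp, mem_filter, mem_univ, true_and] at hx
        simp [hi, (zmod2_ne_zero_iff (x i)).1 hx]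
      · simp [hi]
    · intro h i hi
      have := h i
      simp only [hi, if_true, mem_singleton] at this
      simp [supp, this]
  rw [h1, Fintype.card_piFinset]
  have h2 : ∀ i : Fin n, (if i ∈ B then ({1} : Finset (ZMod 2)) else univ).card
      = if i ∈ B then 1 else 2 := by
    intro i; by_cases hi : i ∈ B <;> simp [hi]
  calc ∏ i : Fin n, (if i ∈ B then ({1} : Finset (ZMod 2)) else univ).card
      = ∏ i : Fin n, (if i ∈ B then 1 else 2) := by
        exact Finset.prod_congr rfl (fun i _ => h2 i)
    _ = (∏ i ∈ B, (if i ∈ B then 1 else 2)) * ∏ i ∈ Bᶜ, (if i ∈ B then 1 else 2) :=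
        (Finset.prod_mul_prod_compl B _).symm
    _ = 2 ^ (n - B.card) := by
        rw [Finset.prod_congr rfl (fun i hi => by simp [hi] : ∀ i ∈ B, _ = 1),
          Finset.prod_congr rfl (fun i hi => by simp [Finset.mem_compl.1 hi] :
            ∀ i ∈ Bᶜ, (if i ∈ B then 1 else 2) = 2)]
        simp [Finset.prod_const, Finset.card_compl]

theorem stmt11 {n : ℕ} (f a : (Fin n → ZMod 2) → ZMod 2)
    (hf : ∀ x, f x = ∑ u ∈ univ.filter (fun u : Fin n → ZMod 2 => supp u ⊆ supp x), a u) :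
    ((univ.filter (fun x : Fin n → ZMod 2 => f x = 1)).card : ℤ)
      = ∑ I ∈ (univ : Finset (Fin n → ZMod 2)).powerset.filter (fun I => I ≠ ∅),
          (-2 : ℤ) ^ (I.card - 1) * 2 ^ (n - (I.biUnion supp).card) *
            ∏ u ∈ I, ((a u).val : ℤ) := by
  classical
  set S : (Fin n → ZMod 2) → Finset (Fin n → ZMod 2) :=
    fun x => univ.filter (fun u : Fin n → ZMod 2 => supp u ⊆ supp x) with hS
  -- Step 1: LHS as a sum of values
  have hval : ∀ z : ZMod 2, (if z = 1 then (1 : ℕ) else 0) = z.val := by intro z; fin_cases z <;> rfl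
  have hL : ((univ.filter (fun x : Fin n → ZMod 2 => f x = 1)).card : ℤ)
      = ∑ x : Fin n → ZMod 2, ((f x).val : ℤ) := by
    rw [Finset.card_filter]
    push_cast
    exact Finset.sum_congr rfl fun x _ => by rw [← hval (f x)]; push_cast; rfl
  -- Step 2: 2 * val as 1 - product
  have key : ∀ x : Fin n → ZMod 2, 2 * ((f x).val : ℤ)
      = 1 - ∏ u ∈ S x, (1 - 2 * ((a u).val : ℤ)) := by
    intro x
    have := chi_sum (S x) a
    rw [← hf x] at this
    linarith
  -- Step 3: expand the product
  have expand : ∀ x : Fin n → ZMod 2,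
      1 - ∏ u ∈ S x, (1 - 2 * ((a u).val : ℤ))
        = ∑ I ∈ ((S x).powerset).erase ∅, -((-2 : ℤ) ^ I.card * ∏ u ∈ I, ((a u).val : ℤ)) := by
    intro x
    have hp : ∏ u ∈ S x, (1 - 2 * ((a u).val : ℤ))
        = ∑ I ∈ (S x).powerset, (-2 : ℤ) ^ I.card * ∏ u ∈ I, ((a u).val : ℤ) := by
      have h0 : ∀ u : Fin n → ZMod 2, (1 - 2 * ((a u).val : ℤ))
          = ((-2) * ((a u).val : ℤ)) + 1 := by intro u; ring
      rw [Finset.prod_congr rfl (fun u _ => h0 u), Finset.prod_add]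
      refine Finset.sum_congr rfl fun I _ => ?_
      rw [Finset.prod_const_one, mul_one, Finset.prod_mul_distrib, Finset.prod_const]
    have hm : ∅ ∈ (S x).powerset := Finset.empty_mem_powerset _
    rw [hp, ← Finset.add_sum_erase _ _ hm]
    simp only [Finset.card_empty, pow_zero, Finset.prod_empty, mul_one, one_mul]
    rw [Finset.sum_neg_distrib]
    ring
  -- Step 4: swap sums
  have hswap : ∑ x : Fin n → ZMod 2,
      ∑ I ∈ ((S x).powerset).erase ∅, -((-2 : ℤ) ^ I.card * ∏ u ∈ I, ((a u).val : ℤ))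
      = ∑ I ∈ (univ : Finset (Fin n → ZMod 2)).powerset.filter (fun I => I ≠ ∅),
          ∑ _x ∈ univ.filter (fun x : Fin n → ZMod 2 => I.biUnion supp ⊆ supp x),
            -((-2 : ℤ) ^ I.card * ∏ u ∈ I, ((a u).val : ℤ)) := by
    refine Finset.sum_comm' ?_
    intro x I
    simp only [Finset.mem_univ, true_and, Finset.mem_erase, Finset.mem_powerset,
      Finset.mem_filter, Finset.subset_univ, Finset.biUnion_subset, and_true]
    constructor
    · rintro ⟨hne, hsub⟩
      refine ⟨fun u hu => ?_, hne⟩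
      have := hsub hu
      simp only [hS, Finset.mem_filter] at this
      exact this.2
    · rintro ⟨hsub, hne⟩
      refine ⟨hne, fun u hu => ?_⟩
      simp only [hS, Finset.mem_filter, Finset.mem_univ, true_and]
      exact hsub u hu
  -- combine
  have h2 : 2 * ((univ.filter (fun x : Fin n → ZMod 2 => f x = 1)).card : ℤ)
      = 2 * ∑ I ∈ (univ : Finset (Fin n → ZMod 2)).powerset.filter (fun I => I ≠ ∅),
          (-2 : ℤ) ^ (I.card - 1) * 2 ^ (n - (I.biUnion supp).card) *
            ∏ u ∈ I, ((a u).val : ℤ) := by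
    rw [hL, Finset.mul_sum]
    rw [Finset.sum_congr rfl (fun x _ => (key x).trans (expand x)), hswap, Finset.mul_sum]
    refine Finset.sum_congr rfl fun I hI => ?_
    rw [Finset.sum_const, count_superset]
    have hne : I ≠ ∅ := (Finset.mem_filter.1 hI).2
    have hc : 1 ≤ I.card := Finset.card_pos.2 (Finset.nonempty_iff_ne_empty.2 hne)
    have hpow : (-2 : ℤ) ^ I.card = (-2 : ℤ) ^ (I.card - 1) * (-2) := by
      rw [← pow_succ]
      congr 1
      omega
    rw [hpow]
    ring
  exact mul_left_cancel₀ (by norm_num) h2
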